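/- arXiv:2008.08219 — 2 statements merged into one kernel-verified Lean document; each statement's English description precedes it below -/
import Mathlib

section
/- Let (Ω, 𝒢) be a measurable space, X a random variable on Ω, and φ = (φ₁,…,φ_D) : Ω → ℝ^D a measurable map with φ₁ ≡ 1 and E[‖φ(X)‖] < ∞. Then there exist n ≤ D points x₁,…,x_n ∈ Ω and positive weights λ₁,…,λ_n summing to 1 such that E[φᵢ(X)] = Σⱼ λⱼ φᵢ(xⱼ) for all i = 1,…,D, and moreover the points can be chosen so that φ(xⱼ) lies in the support of the distribution of φ(X) for each j. -/
open MeasureTheory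

/-- The support of a measure: the set of points all of whose neighborhoods have
positive measure (the smallest closed set of full measure). -/
def measureSupport {E : Type*} [TopologicalSpace E] [MeasurableSpace E] (ν : Measure E) :
    Set E := {x | ∀ U ∈ nhds x, 0 < ν U}

section Aux

open Set Submodule Module

/-- The complement of the support is open. -/
lemma isOpen_compl_measureSupport {E : Type*} [TopologicalSpace E] [MeasurableSpace E]
    (ν : Measure E) : IsOpen (measureSupport ν)ᶜ := by
  rw [isOpen_iff_mem_nhds]
  intro x hx
  simp only [measureSupport, Set.mem_compl_iff, Set.mem_setOf_eq, not_forall] at hx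
  obtain ⟨U, hU, hU0⟩ := hx
  obtain ⟨V, hVU, hVopen, hxV⟩ := mem_nhds_iff.mp hU
  refine Filter.mem_of_superset (hVopen.mem_nhds hxV) fun z hz hzS => ?_
  have : (0 : ENNReal) < ν V := hzS V (hVopen.mem_nhds hz)
  exact absurd (lt_of_lt_of_le this (measure_mono hVU)) hU0

/-- The support of a measure on a second-countable space has full measure. -/
lemma measure_compl_measureSupport {E : Type*} [TopologicalSpace E] [MeasurableSpace E]
    [OpensMeasurableSpace E] [SecondCountableTopology E] (ν : Measure E) :
    ν (measureSupport ν)ᶜ = 0 := by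
  have h : ∀ x : ((measureSupport ν)ᶜ : Set E), ∃ U : Set E,
      IsOpen U ∧ (x : E) ∈ U ∧ ν U = 0 := by
    rintro ⟨x, hx⟩
    simp only [measureSupport, Set.mem_compl_iff, Set.mem_setOf_eq, not_forall] at hx
    obtain ⟨U, hU, hU0⟩ := hx
    obtain ⟨V, hVU, hVopen, hxV⟩ := mem_nhds_iff.mp hU
    refine ⟨V, hVopen, hxV, le_antisymm ?_ zero_le⟩
    exact le_trans (measure_mono hVU) (le_of_not_gt hU0)
  choose U hUo hxU hU0 using h
  have hcover : (measureSupport ν)ᶜ ⊆ ⋃ x, U x :=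
    fun x hx => Set.mem_iUnion.mpr ⟨⟨x, hx⟩, hxU _⟩
  obtain ⟨T, hTc, hTU⟩ := TopologicalSpace.isOpen_iUnion_countable U hUo
  refine measure_mono_null hcover ?_
  rw [← hTU]
  exact (measure_biUnion_null_iff hTc).mpr fun i _ => hU0 i

/-- Separation of a point of the closure of a convex set from the convex set itself,
in a finite-dimensional normed space: there is a continuous linear functional that is
minimized at the point and is not constant on the set. -/
lemma exists_separating_functional {V : Type*} [NormedAddCommGroup V] [NormedSpace ℝ V]
    [FiniteDimensional ℝ V] {C : Set V} (hC : Convex ℝ C) {c : V} (hc : c ∈ C)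
    {m : V} (hmcl : m ∈ closure C) (hm : m ∉ C) :
    ∃ F : V →L[ℝ] ℝ, (∀ y ∈ C, F m ≤ F y) ∧ ∃ y₀ ∈ C, F m < F y₀ := by
  set W : Submodule ℝ V := (affineSpan ℝ C).direction with hWdef
  have hmW : m - c ∈ W := by
    have hcl : IsClosed ((affineSpan ℝ C : Set V)) :=
      (affineSpan ℝ C).closed_of_finiteDimensional
    have hmas : m ∈ affineSpan ℝ C :=
      hcl.closure_subset_iff.mpr (subset_affineSpan ℝ C) hmcl
    simpa using AffineSubspace.vsub_mem_direction hmas (subset_affineSpan ℝ C hc)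
  have hCW : ∀ y ∈ C, y - c ∈ W := fun y hy => by
    simpa using AffineSubspace.vsub_mem_direction (subset_affineSpan ℝ C hy)
      (subset_affineSpan ℝ C hc)
  set C₀ : Set V := (fun y => y - c) '' C with hC₀def
  have hC₀W : C₀ ⊆ (W : Set V) := by rintro _ ⟨y, hy, rfl⟩; exact hCW y hy
  set C₁ : Set W := W.subtype ⁻¹' C₀ with hC₁def
  have hmemC₁ : ∀ y (hy : y ∈ C), (⟨y - c, hCW y hy⟩ : W) ∈ C₁ := fun y hy => ⟨y, hy, rfl⟩
  have hC₀conv : Convex ℝ C₀ := by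
    have := hC.translate (-c)
    have heq : (fun z => -c + z) '' C = C₀ := by
      ext v; constructor
      · rintro ⟨y, hy, rfl⟩; exact ⟨y, hy, by abel⟩
      · rintro ⟨y, hy, rfl⟩; exact ⟨y, hy, by abel⟩
    rwa [heq] at this
  have hC₁conv : Convex ℝ C₁ := hC₀conv.linear_preimage W.subtype
  -- the span of `C₁` is everything
  have hspan0 : Submodule.span ℝ C₀ = W := by
    apply le_antisymm
    · rw [Submodule.span_le]; exact hC₀W
    · rw [hWdef, direction_affineSpan, vectorSpan_def, Submodule.span_le]
      rintro v hv
      rw [Set.mem_vsub] at hv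
      obtain ⟨y1, hy1, y2, hy2, rfl⟩ := hv
      have : y1 -ᵥ y2 = (y1 - c) - (y2 - c) := by rw [vsub_eq_sub]; abel
      rw [this]
      exact sub_mem (Submodule.subset_span ⟨y1, hy1, rfl⟩)
        (Submodule.subset_span ⟨y2, hy2, rfl⟩)
  have hspan₁ : Submodule.span ℝ C₁ = ⊤ := by
    apply Submodule.map_injective_of_injective W.injective_subtype
    rw [Submodule.map_span, Submodule.map_top, Submodule.range_subtype]
    have himg : W.subtype '' C₁ = C₀ := by
      rw [hC₁def, Set.image_preimage_eq_of_subset]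
      intro v hv
      exact ⟨⟨v, hC₀W hv⟩, rfl⟩
    rw [himg, hspan0]
  have h0C₁ : (0 : W) ∈ C₁ := ⟨c, hc, by simp⟩
  have haff : affineSpan ℝ C₁ = ⊤ := by
    rw [AffineSubspace.affineSpan_eq_top_iff_vectorSpan_eq_top_of_nonempty ℝ ↥W ↥W ⟨0, h0C₁⟩]
    apply le_antisymm le_top
    rw [← hspan₁, Submodule.span_le]
    intro x hx
    have := vsub_mem_vectorSpan ℝ hx h0C₁
    simpa using this
  obtain ⟨w, hw⟩ := (hC₁conv.interior_nonempty_iff_affineSpan_eq_top).mpr haff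
  set m₁ : W := ⟨m - c, hmW⟩ with hm₁def
  have hm₁ : m₁ ∉ C₁ := by
    rintro ⟨y, hy, hyy⟩
    apply hm
    have h : y - c = m - c := hyy
    have : y = m := by
      have := congrArg (· + c) h
      simpa using this
    exact this ▸ hy
  have hm₁i : m₁ ∉ interior C₁ := fun h => hm₁ (interior_subset h)
  obtain ⟨f, hf⟩ := geometric_hahn_banach_open_point hC₁conv.interior isOpen_interior hm₁i
  -- from strict inequality on the interior, get non-strict on all of C₁
  have hfle : ∀ a ∈ C₁, f a ≤ f m₁ := by
    intro a ha
    by_contra hlt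
    push_neg at hlt
    have hwa : f w < f m₁ := hf w hw
    have hfw : f w < f a := hwa.trans hlt
    have hne : f a - f w ≠ 0 := sub_ne_zero.mpr hfw.ne'
    set t : ℝ := (f a - f m₁) / (2 * (f a - f w)) with htdef
    have ht0 : 0 < t := div_pos (by linarith) (by linarith)
    have ht1 : t < 1 := by
      rw [div_lt_one (by linarith)]; linarith
    have hmem : t • w + (1 - t) • a ∈ interior C₁ :=
      hC₁conv.combo_interior_self_mem_interior hw ha ht0 (by linarith) (by ring)
    have h2 := hf _ hmem
    simp only [map_add, _root_.map_smul, smul_eq_mul] at h2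
    rw [sub_mul, one_mul] at h2
    have key : t * f a - t * f w = (f a - f m₁) / 2 := by
      rw [htdef]; field_simp
    linarith
  -- extend `-f` to the whole space
  obtain ⟨W', hcompl⟩ := Submodule.exists_isCompl W
  set π : V →ₗ[ℝ] W := Submodule.linearProjOfIsCompl W W' hcompl with hπdef
  set F : V →L[ℝ] ℝ :=
    LinearMap.toContinuousLinearMap (-((f : W →ₗ[ℝ] ℝ).comp π)) with hFdef
  have hFval : ∀ v : V, F v = -(f (π v)) := by
    intro v
    rw [hFdef]
    simp
  have hπeq : ∀ (v : V) (hv : v - c ∈ W), f (π v) = f (⟨v - c, hv⟩ : W) + f (π c) := by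
    intro v hv
    have h1 : π v = ⟨v - c, hv⟩ + π c := by
      have h2 : π (v - c) = (⟨v - c, hv⟩ : W) :=
        Submodule.linearProjOfIsCompl_apply_left hcompl ⟨v - c, hv⟩
      have h3 : π v = π (v - c) + π c := by
        rw [← map_add]; congr 1; abel
      rw [h3, h2]
    rw [h1, map_add]
  refine ⟨F, ?_, ?_⟩
  · intro y hy
    have h1 := hπeq m hmW
    have h2 := hπeq y (hCW y hy)
    have h3 : f (⟨y - c, hCW y hy⟩ : W) ≤ f m₁ := hfle _ (hmemC₁ y hy)
    rw [hFval m, hFval y, h1, h2]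
    have : f m₁ = f (⟨m - c, hmW⟩ : W) := rfl
    linarith [this]
  · obtain ⟨yw, hyw, hyweq⟩ := interior_subset hw
    refine ⟨yw, hyw, ?_⟩
    have h1 := hπeq m hmW
    have h2 := hπeq yw (hCW yw hyw)
    have hwval : (⟨yw - c, hCW yw hyw⟩ : W) = w := by
      apply Subtype.ext; exact hyweq
    have h3 : f w < f m₁ := hf w hw
    rw [hFval m, hFval yw, h1, h2, hwval]
    have : f m₁ = f (⟨m - c, hmW⟩ : W) := rfl
    linarith [this]

variable {D : ℕ}

/-- A set is "thick" w.r.t. a measure if it meets every measurable set of positive measure. -/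
def MeasThick (ν : Measure (Fin D → ℝ)) (E : Set (Fin D → ℝ)) : Prop :=
  ∀ A, MeasurableSet A → ν A ≠ 0 → (A ∩ E).Nonempty

/-- The dimension-reduction step in the Bayer–Teichmann/Tchakaloff argument. -/
lemma tchakaloff_step (ν : Measure (Fin D → ℝ)) [IsProbabilityMeasure ν]
    (hi : Integrable id ν) (E : Set (Fin D → ℝ)) (hE : MeasThick ν E)
    (hm : (∫ y, y ∂ν) ∉ convexHull ℝ E) :
    ∃ E', E' ⊆ E ∧ MeasThick ν E' ∧
      Module.finrank ℝ (affineSpan ℝ E').direction <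
        Module.finrank ℝ (affineSpan ℝ E).direction := by
  classical
  set m : Fin D → ℝ := ∫ y, y ∂ν with hmdef
  -- the closure of E has full measure
  have hclE : ν (closure E)ᶜ = 0 := by
    by_contra h
    obtain ⟨x, hx1, hx2⟩ := hE _ (isClosed_closure.measurableSet.compl) h
    exact hx1 (subset_closure hx2)
  have haem : ∀ᵐ y ∂ν, y ∈ closure (convexHull ℝ E) := by
    have hsub : closure E ⊆ closure (convexHull ℝ E) :=
      closure_mono (subset_convexHull ℝ E)
    filter_upwards [(ae_iff.mpr (by exact hclE) : ∀ᵐ y ∂ν, y ∈ closure E)] with y hy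
    exact hsub hy
  have hmcl : m ∈ closure (convexHull ℝ E) :=
    ((convex_convexHull ℝ E).closure).integral_mem isClosed_closure haem hi
  have hEne : E.Nonempty := by
    obtain ⟨x, _, hx⟩ := hE Set.univ MeasurableSet.univ
      (by rw [measure_univ]; exact one_ne_zero)
    exact ⟨x, hx⟩
  obtain ⟨c, hc⟩ := hEne
  obtain ⟨F, hFle, y₀, hy₀, hy₀lt⟩ :=
    exists_separating_functional (convex_convexHull ℝ E)
      (subset_convexHull ℝ E hc) hmcl hm
  -- a point of E where F is strictly bigger
  have he₁ : ∃ e₁ ∈ E, F m < F e₁ := by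
    by_contra h
    push_neg at h
    have hEeq : ∀ y ∈ E, F y = F m := fun y hy =>
      le_antisymm (h y hy) (hFle y (subset_convexHull ℝ E hy))
    have hhull : convexHull ℝ E ⊆ {y | F y = F m} := by
      apply convexHull_min _ (convex_hyperplane (IsLinearMap.mk F.map_add F.map_smul) (F m))
      exact hEeq
    exact absurd (hhull hy₀) (by simp; linarith)
  obtain ⟨e₁, he₁E, he₁lt⟩ := he₁
  -- the hyperplane {F = F m} has full measure
  set H : Set (Fin D → ℝ) := {y | F y = F m} with hHdef
  have hHmeas : MeasurableSet H := by
    have : H = F ⁻¹' {F m} := rfl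
    rw [this]
    exact F.continuous.measurable (measurableSet_singleton _)
  have hHfull : ν Hᶜ = 0 := by
    have hgint : Integrable (fun y => F y - F m) ν := by
      exact (F.integrable_comp hi).sub (integrable_const _)
    have hgnn : 0 ≤ᵐ[ν] fun y => F y - F m := by
      have hclosed : closure E ⊆ {y | F m ≤ F y} := by
        apply closure_minimal _ (isClosed_le continuous_const F.continuous)
        exact fun y hy => hFle y (subset_convexHull ℝ E hy)
      filter_upwards [(ae_iff.mpr (by exact hclE) : ∀ᵐ y ∂ν, y ∈ closure E)] with y hy
      have := hclosed hy
      simpa [sub_nonneg] using this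
    have hgint' : Integrable (fun y => F y) ν := by
      simpa [Function.comp] using F.integrable_comp hi
    have hgzero : ∫ y, (F y - F m) ∂ν = 0 := by
      rw [integral_sub hgint' (integrable_const _)]
      have h1 : ∫ y, F y ∂ν = F m := by
        have := F.integral_comp_comm hi
        simpa [hmdef, Function.comp] using this
      simp [h1]
    have hae0 := (integral_eq_zero_iff_of_nonneg_ae hgnn hgint).mp hgzero
    have hae : ∀ᵐ y ∂ν, F y = F m := by
      filter_upwards [hae0] with y hy
      have h : F y - F m = (0 : (Fin D → ℝ) → ℝ) y := hy
      simp only [Pi.zero_apply] at h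
      linarith
    have := ae_iff.mp hae
    simpa [hHdef, Set.compl_setOf] using this
  -- the new thick set
  have hthick' : MeasThick ν (E ∩ H) := by
    intro A hA hA0
    have h1 : ν (A ∩ H) ≠ 0 := by
      intro h
      apply hA0
      have hsub : A ⊆ (A ∩ H) ∪ Hᶜ := by
        intro x hx
        by_cases hxH : x ∈ H
        · exact Or.inl ⟨hx, hxH⟩
        · exact Or.inr hxH
      have := le_trans (measure_mono hsub) (measure_union_le (μ := ν) (A ∩ H) Hᶜ)
      rw [h, hHfull] at this
      simpa using this
    obtain ⟨x, hx1, hx2⟩ := hE _ (hA.inter hHmeas) h1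
    exact ⟨x, hx1.1, hx2, hx1.2⟩
  refine ⟨E ∩ H, Set.inter_subset_left, hthick', ?_⟩
  · -- dimension decreases
    have hHaff : ∃ Q : AffineSubspace ℝ (Fin D → ℝ), (Q : Set (Fin D → ℝ)) = H := by
      refine ⟨AffineSubspace.comap (F.toLinearMap.toAffineMap)
        (AffineSubspace.mk' (F m) (⊥ : Submodule ℝ ℝ)), ?_⟩
      ext y
      simp only [AffineSubspace.mem_coe, AffineSubspace.mem_comap,
        AffineSubspace.mem_mk', Submodule.mem_bot, vsub_eq_sub,
        LinearMap.coe_toAffineMap, ContinuousLinearMap.coe_coe, sub_eq_zero, hHdef,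
        Set.mem_setOf_eq]
    obtain ⟨Q, hQ⟩ := hHaff
    have hlt : affineSpan ℝ (E ∩ H) < affineSpan ℝ E := by
      refine lt_of_le_of_ne (affineSpan_mono ℝ Set.inter_subset_left) ?_
      intro heq
      have he₁mem : e₁ ∈ affineSpan ℝ (E ∩ H) := heq ▸ subset_affineSpan ℝ E he₁E
      have hle : affineSpan ℝ (E ∩ H) ≤ Q := by
        rw [affineSpan_le, hQ]; exact Set.inter_subset_right
      have : e₁ ∈ H := hQ ▸ hle he₁mem
      rw [hHdef, Set.mem_setOf_eq] at this
      linarith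
    have hne' : ((affineSpan ℝ (E ∩ H) : AffineSubspace ℝ (Fin D → ℝ)) :
        Set (Fin D → ℝ)).Nonempty := by
      obtain ⟨x, _, hx⟩ := hthick' Set.univ MeasurableSet.univ
        (by rw [measure_univ]; exact one_ne_zero)
      exact ⟨x, subset_affineSpan ℝ _ hx⟩
    have hdirlt := AffineSubspace.direction_lt_of_nonempty hlt hne'
    exact Submodule.finrank_lt_finrank_of_lt hdirlt
      
/-- The barycenter of a probability measure with integrable identity lies in the convex hull
of any thick set. -/
lemma barycenter_mem_convexHull (ν : Measure (Fin D → ℝ)) [IsProbabilityMeasure ν]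
    (hi : Integrable id ν) (E : Set (Fin D → ℝ)) (hE : MeasThick ν E) :
    (∫ y, y ∂ν) ∈ convexHull ℝ E := by
  obtain ⟨d, hd⟩ : ∃ d, Module.finrank ℝ (affineSpan ℝ E).direction ≤ d := ⟨_, le_rfl⟩
  induction d generalizing E with
  | zero =>
    by_contra hm
    obtain ⟨E', _, _, hlt⟩ := tchakaloff_step ν hi E hE hm
    omega
  | succ d ih =>
    by_contra hm
    obtain ⟨E', hsub, hE', hlt⟩ := tchakaloff_step ν hi E hE hm
    exact hm (convexHull_mono hsub (ih E' hE' (by omega)))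

end Aux

/-- **Generalized Tchakaloff theorem.**  Given a random variable `X` with law `μ` on a
measurable space `Ω` and an integrable vector of test functions `φ : Ω → ℝ^D` with
`φ₁ ≡ 1`, there is a cubature formula with at most `D` nodes, whose nodes may be chosen
so that their `φ`-images lie in the support of the law of `φ(X)`. -/
theorem generalized_tchakaloff {Ω : Type*} [MeasurableSpace Ω]
    (μ : Measure Ω) [IsProbabilityMeasure μ] (D : ℕ) (hD : 0 < D)
    (φ : Ω → Fin D → ℝ) (hφ : Measurable φ) (hint : Integrable φ μ)
    (hone : ∀ ω, φ ω ⟨0, hD⟩ = 1) :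
    ∃ n : ℕ, n ≤ D ∧ ∃ (x : Fin n → Ω) (l : Fin n → ℝ),
      (∀ j, 0 < l j) ∧ (∑ j, l j = 1) ∧
      (∀ i : Fin D, ∫ ω, φ ω i ∂μ = ∑ j, l j * φ (x j) i) ∧
      (∀ j, φ (x j) ∈ measureSupport (μ.map φ)) := by
  classical
  set ν : Measure (Fin D → ℝ) := μ.map φ with hνdef
  haveI : IsProbabilityMeasure ν := Measure.isProbabilityMeasure_map hφ.aemeasurable
  set S : Set (Fin D → ℝ) := measureSupport ν with hSdef
  have hSmeas : MeasurableSet S := by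
    rw [← compl_compl S]
    exact (isOpen_compl_measureSupport ν).measurableSet.compl
  have hSfull : ν Sᶜ = 0 := measure_compl_measureSupport ν
  set E : Set (Fin D → ℝ) := Set.range φ ∩ S with hEdef
  have hthick : MeasThick ν E := by
    intro A hA hA0
    have h1 : ν (A ∩ S) ≠ 0 := by
      intro h
      apply hA0
      have hsub : A ⊆ (A ∩ S) ∪ Sᶜ := by
        intro x hx
        by_cases hxS : x ∈ S
        · exact Or.inl ⟨hx, hxS⟩
        · exact Or.inr hxS
      have := le_trans (measure_mono hsub) (measure_union_le (μ := ν) (A ∩ S) Sᶜ)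
      rw [h, hSfull] at this
      simpa using this
    have h2 : μ (φ ⁻¹' (A ∩ S)) ≠ 0 := by
      rwa [← Measure.map_apply hφ (hA.inter hSmeas)]
    have h3 : (φ ⁻¹' (A ∩ S)).Nonempty := by
      rw [Set.nonempty_iff_ne_empty]
      intro h
      rw [h] at h2
      simp at h2
    obtain ⟨ω, hω⟩ := h3
    exact ⟨φ ω, hω.1, Set.mem_range_self ω, hω.2⟩
  have hiν : Integrable id ν := by
    rw [hνdef, integrable_map_measure aestronglyMeasurable_id hφ.aemeasurable]
    exact hint
  have hm : (∫ y, y ∂ν) ∈ convexHull ℝ E := barycenter_mem_convexHull ν hiν E hthick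
  have hmint : (∫ y, y ∂ν) = ∫ ω, φ ω ∂μ :=
    integral_map hφ.aemeasurable aestronglyMeasurable_id
  obtain ⟨ι, hι, z, w, hzE, hzaff, hwpos, hwsum, hwz⟩ :=
    eq_pos_convex_span_of_mem_convexHull hm
  letI := hι
  have hcoord : ∀ i, z i ⟨0, hD⟩ = 1 := by
    intro i
    obtain ⟨ω, hω⟩ := (hzE (Set.mem_range_self i)).1
    rw [← hω]
    exact hone ω
  have hli : LinearIndependent ℝ z := by
    rw [Fintype.linearIndependent_iff]
    intro g hg
    have hsum0 : ∑ i, g i = 0 := by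
      have := congrFun hg ⟨0, hD⟩
      simpa [Finset.sum_apply, hcoord] using this
    exact fun i => affineIndependent_iff.mp hzaff Finset.univ g hsum0 hg i (Finset.mem_univ i)
  have hcard : Fintype.card ι ≤ D := by
    have h := hli.fintype_card_le_finrank
    rwa [Module.finrank_fin_fun] at h
  have hzφ : ∀ i : ι, ∃ ω, φ ω = z i := fun i => (hzE (Set.mem_range_self i)).1
  choose ψ hψ using hzφ
  set e : Fin (Fintype.card ι) ≃ ι := (Fintype.equivFin ι).symm with hedef
  refine ⟨Fintype.card ι, hcard, fun j => ψ (e j), fun j => w (e j),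
    fun j => hwpos _, ?_, ?_, ?_⟩
  · rw [Equiv.sum_comp e w]; exact hwsum
  · intro i
    have hproj := (ContinuousLinearMap.proj (R := ℝ)
      (φ := fun _ : Fin D => ℝ) i).integral_comp_comm hint
    simp only [ContinuousLinearMap.proj_apply] at hproj
    rw [hproj, ← hmint, ← hwz]
    simp only [Finset.sum_apply, Pi.smul_apply, smul_eq_mul]
    rw [← Equiv.sum_comp e (fun i' => w i' * z i' i)]
    exact Finset.sum_congr rfl fun j _ => by rw [hψ (e j)]
  · intro j
    rw [hψ (e j)]
    exact (hzE (Set.mem_range_self (e j))).2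
end

section
/- Let X, X₁, X₂, … be random variables where X₁, X₂, … are i.i.d., φ : Ω → ℝ^D measurable and integrable for both laws, and suppose aff(supp P_{φ(X₁)}) = aff(supp P_{φ(X)}) and supp P_{φ(X₁)} ⊇ supp P_{φ(X)}. Then almost surely there exists n with E[φ(X)] ∈ conv{φ(X₁),…,φ(X_n)}. -/
open MeasureTheory

section Support

variable {E : Type*} [TopologicalSpace E] [MeasurableSpace E]

lemma measureSupport_compl_null [SecondCountableTopology E]
    (ν : Measure E) : ν (measureSupport ν)ᶜ = 0 := by
  classical
  set ι := {U : Set E // IsOpen U ∧ ν U = 0}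
  have hsub : (measureSupport ν)ᶜ ⊆ ⋃ i : ι, (i : Set E) := by
    intro x hx
    simp only [measureSupport, Set.mem_compl_iff, Set.mem_setOf_eq, not_forall] at hx
    obtain ⟨U, hU, hUpos⟩ := hx
    have hU0 : ν U = 0 := by
      by_contra h
      exact hUpos (pos_iff_ne_zero.mpr h)
    obtain ⟨V, hVU, hVopen, hxV⟩ := mem_nhds_iff.mp hU
    exact Set.mem_iUnion.mpr ⟨⟨V, hVopen, le_antisymm (le_trans (measure_mono hVU) hU0.le) zero_le⟩, hxV⟩
  obtain ⟨T, hTc, hTU⟩ := TopologicalSpace.isOpen_iUnion_countable (fun i : ι => (i : Set E))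
    (fun i => i.2.1)
  have : ν (⋃ i : ι, (i : Set E)) = 0 := by
    rw [← hTU]
    refine measure_biUnion_null_iff hTc |>.mpr fun i _ => i.2.2
  exact le_antisymm (le_trans (measure_mono hsub) this.le) zero_le

lemma isClosed_measureSupport (ν : Measure E) : IsClosed (measureSupport ν) := by
  rw [← isOpen_compl_iff]
  rw [isOpen_iff_mem_nhds]
  intro x hx
  simp only [measureSupport, Set.mem_compl_iff, Set.mem_setOf_eq, not_forall] at hx
  obtain ⟨U, hU, hUpos⟩ := hx
  obtain ⟨V, hVU, hVopen, hxV⟩ := mem_nhds_iff.mp hU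
  refine Filter.mem_of_superset (hVopen.mem_nhds hxV) ?_
  intro y hy
  simp only [measureSupport, Set.mem_compl_iff, Set.mem_setOf_eq, not_forall]
  exact ⟨V, hVopen.mem_nhds hy, fun h => hUpos (h.trans_le (measure_mono hVU))⟩

lemma measureSupport_nonempty (ν : Measure E) [IsProbabilityMeasure ν]
    [SecondCountableTopology E] : (measureSupport ν).Nonempty := by
  rw [Set.nonempty_iff_ne_empty]
  intro h
  have h1 : ν (measureSupport ν)ᶜ = 0 := measureSupport_compl_null ν
  rw [h, Set.compl_empty, measure_univ] at h1
  exact one_ne_zero h1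

end Support

section Dot

variable {D : ℕ}

def dotp (u v : Fin D → ℝ) : ℝ := ∑ i, u i * v i

lemma dotp_comm (u v : Fin D → ℝ) : dotp u v = dotp v u := by
  simp [dotp, mul_comm]

lemma dotp_sub_right (u a b : Fin D → ℝ) : dotp u (a - b) = dotp u a - dotp u b := by
  simp [dotp, mul_sub, Finset.sum_sub_distrib]

lemma dotp_add_right (u a b : Fin D → ℝ) : dotp u (a + b) = dotp u a + dotp u b := by
  simp [dotp, mul_add, Finset.sum_add_distrib]

lemma dotp_smul_right (u : Fin D → ℝ) (c : ℝ) (v : Fin D → ℝ) :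
    dotp u (c • v) = c * dotp u v := by
  simp [dotp, Finset.mul_sum]; ring_nf; simp [mul_comm, mul_left_comm]

lemma dotp_smul_left (u : Fin D → ℝ) (c : ℝ) (v : Fin D → ℝ) :
    dotp (c • u) v = c * dotp u v := by
  rw [dotp_comm, dotp_smul_right, dotp_comm]

lemma dotp_self_nonneg (u : Fin D → ℝ) : 0 ≤ dotp u u :=
  Finset.sum_nonneg fun i _ => mul_self_nonneg _

lemma dotp_self_pos {u : Fin D → ℝ} (h : u ≠ 0) : 0 < dotp u u := by
  obtain ⟨i, hi⟩ := Function.ne_iff.mp h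
  exact Finset.sum_pos' (fun j _ => mul_self_nonneg _)
    ⟨i, Finset.mem_univ i, mul_self_pos.mpr hi⟩

lemma continuous_dotp_right (u : Fin D → ℝ) : Continuous fun v => dotp u v :=
  continuous_finset_sum _ fun i _ => continuous_const.mul (continuous_apply i)

lemma abs_dotp_le (u v : Fin D → ℝ) : |dotp u v| ≤ D * ‖u‖ * ‖v‖ := by
  calc |dotp u v| ≤ ∑ i, |u i * v i| := Finset.abs_sum_le_sum_abs _ _
    _ ≤ ∑ _i : Fin D, ‖u‖ * ‖v‖ := by
        refine Finset.sum_le_sum fun i _ => ?_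
        rw [abs_mul]
        have h1 : |u i| ≤ ‖u‖ := by
          simpa [Real.norm_eq_abs] using norm_le_pi_norm u i
        have h2 : |v i| ≤ ‖v‖ := by
          simpa [Real.norm_eq_abs] using norm_le_pi_norm v i
        exact mul_le_mul h1 h2 (abs_nonneg _) (norm_nonneg _)
    _ = D * ‖u‖ * ‖v‖ := by simp [Finset.sum_const, mul_assoc]

lemma integral_dotp (ρ : Measure (Fin D → ℝ)) (hint : Integrable id ρ) (u : Fin D → ℝ) :
    ∫ z, dotp u z ∂ρ = dotp u (∫ z, z ∂ρ) := by
  unfold dotp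
  rw [integral_finset_sum]
  · refine Finset.sum_congr rfl fun i _ => ?_
    rw [integral_const_mul]
    congr 1
    have := ContinuousLinearMap.integral_comp_comm (ContinuousLinearMap.proj (R := ℝ)
      (φ := fun _ : Fin D => ℝ) i) hint
    simpa [id] using this
  · intro i _
    exact (((ContinuousLinearMap.proj (R := ℝ) (φ := fun _ : Fin D => ℝ) i).integrable_comp
      hint).const_mul _)

lemma nonneg_of_small (a b : ℝ) (hb : 0 ≤ b) (h : ∀ θ : ℝ, 0 < θ → θ ≤ 1 → 0 ≤ a + θ * b) :
    0 ≤ a := by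
  by_contra ha
  push_neg at ha
  set θ := min 1 (-a / (2 * (b + 1))) with hθ
  have hθpos : 0 < θ := lt_min one_pos (div_pos (by linarith) (by linarith))
  have hθ1 : θ ≤ 1 := min_le_left _ _
  have := h θ hθpos hθ1
  have hθb : θ * b ≤ -a / 2 := by
    calc θ * b ≤ (-a / (2 * (b + 1))) * b := by
          apply mul_le_mul_of_nonneg_right (min_le_right _ _) hb
      _ ≤ -a / 2 := by
          rw [div_mul_eq_mul_div, div_le_div_iff₀ (by positivity) (by norm_num)]
          nlinarith
  linarith

end Dot

lemma dotp_neg_left {D : ℕ} (u v : Fin D → ℝ) : dotp (-u) v = -dotp u v := by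
  have := dotp_smul_left u (-1) v
  simpa using this

lemma continuous_dotp_left {D : ℕ} (w : Fin D → ℝ) : Continuous fun u : Fin D → ℝ => dotp u w := by
  have : (fun u : Fin D → ℝ => dotp u w) = fun u => dotp w u := funext fun u => dotp_comm u w
  rw [this]; exact continuous_dotp_right w

lemma dotp_expand {D : ℕ} (w d : Fin D → ℝ) (θ : ℝ) :
    dotp (w + θ • d) (w + θ • d) = dotp w w + θ * (2 * dotp w d) + θ ^ 2 * dotp d d := by
  have h : ∀ i, (w i + θ * d i) * (w i + θ * d i)
      = w i * w i + θ * (2 * (w i * d i)) + θ ^ 2 * (d i * d i) := fun i => by ring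
  simp only [dotp, Pi.add_apply, Pi.smul_apply, smul_eq_mul, h]
  rw [Finset.sum_add_distrib, Finset.sum_add_distrib, ← Finset.mul_sum, ← Finset.mul_sum,
    ← Finset.mul_sum]

lemma dotp_integrable {D : ℕ} (ρ : Measure (Fin D → ℝ)) (hint : Integrable id ρ)
    (u : Fin D → ℝ) : Integrable (fun z => dotp u z) ρ := by
  unfold dotp
  apply integrable_finset_sum
  intro i _
  exact (((ContinuousLinearMap.proj (R := ℝ) (φ := fun _ : Fin D => ℝ) i).integrable_comp
    hint).const_mul _)

/-- The linear functional `z ↦ dotp u z`. -/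
def dotl {D : ℕ} (u : Fin D → ℝ) : (Fin D → ℝ) →ₗ[ℝ] ℝ where
  toFun v := dotp u v
  map_add' a b := dotp_add_right u a b
  map_smul' c v := by simp [dotp_smul_right]

lemma key_lemma {D : ℕ} (ρμ ρν : Measure (Fin D → ℝ)) [IsProbabilityMeasure ρμ]
    [IsProbabilityMeasure ρν]
    (hint : Integrable id ρμ)
    (haff : affineSpan ℝ (measureSupport ρν) = affineSpan ℝ (measureSupport ρμ))
    (hsupp : measureSupport ρμ ⊆ measureSupport ρν) :
    ∃ (Q : Finset (Fin D → ℝ)) (ε : ℝ), 0 < ε ∧ Q.Nonempty ∧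
      (↑Q : Set (Fin D → ℝ)) ⊆ measureSupport ρν ∧
      ∀ y : (Fin D → ℝ) → Fin D → ℝ,
        (∀ q ∈ Q, y q ∈ measureSupport ρν ∧ dist (y q) q < ε) →
        (∫ z, z ∂ρμ) ∈ convexHull ℝ (y '' ↑Q) := by
  classical
  set S := measureSupport ρμ with hS
  set T := measureSupport ρν with hT
  set m := ∫ z, z ∂ρμ with hm
  set A := affineSpan ℝ S with hA
  set V := A.direction with hV
  have h_ae_S : ∀ᵐ z ∂ρμ, z ∈ S := by
    have h := measureSupport_compl_null ρμ
    rw [ae_iff]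
    exact measure_mono_null (fun z hz => hz) h
  have hmA : m ∈ A := by
    have := Convex.integral_mem (μ := ρμ) (f := fun z : Fin D → ℝ => z) A.convex
      A.closed_of_finiteDimensional
      (h_ae_S.mono fun z hz => subset_affineSpan ℝ S hz) hint
    exact this
  have hTA : T ⊆ (A : Set (Fin D → ℝ)) := by
    intro t ht
    have h1 : t ∈ affineSpan ℝ T := subset_affineSpan ℝ T ht
    rw [haff] at h1
    exact h1
  -- key separation property from the mean
  have key2 : ∀ u : Fin D → ℝ, u ∈ V → u ≠ 0 → ∃ t ∈ T, 0 < dotp u (t - m) := by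
    intro u huV hu0
    by_contra hcon
    push_neg at hcon
    have hle : ∀ t ∈ T, dotp u t ≤ dotp u m := by
      intro t ht
      have h1 := hcon t ht
      rw [dotp_sub_right] at h1
      linarith
    set g : (Fin D → ℝ) → ℝ := fun z => dotp u m - dotp u z with hg
    have hg_int : Integrable g ρμ := (integrable_const _).sub (dotp_integrable ρμ hint u)
    have hg_zero : ∫ z, g z ∂ρμ = 0 := by
      rw [hg]
      rw [integral_sub (integrable_const _) (dotp_integrable ρμ hint u), integral_const,
        integral_dotp ρμ hint u]
      simp [← hm]
    have hg_nonneg : 0 ≤ᵐ[ρμ] g := h_ae_S.mono fun z hz => by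
      have := hle z (hsupp hz)
      simp only [hg, Pi.zero_apply]
      linarith
    have hg_ae : g =ᵐ[ρμ] 0 := (integral_eq_zero_iff_of_nonneg_ae hg_nonneg hg_int).mp hg_zero
    set N := {z : Fin D → ℝ | dotp u z < dotp u m} with hN
    have hN_null : ρμ N = 0 := by
      refine measure_mono_null ?_ (ae_iff.mp hg_ae)
      intro z hz
      simp only [hN, Set.mem_setOf_eq] at hz
      simp only [Set.mem_setOf_eq, hg, Pi.zero_apply]
      intro h; exact absurd h (by linarith)
    have hN_open : IsOpen N := isOpen_lt (continuous_dotp_right u) continuous_const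
    have hSN : ∀ z ∈ S, dotp u m ≤ dotp u z := by
      intro z hz
      by_contra h
      push_neg at h
      have hz' : ∀ U ∈ nhds z, 0 < ρμ U := hz
      have hpos := hz' N (hN_open.mem_nhds h)
      rw [hN_null] at hpos
      exact lt_irrefl _ hpos
    have heq : ∀ z ∈ S, dotp u z = dotp u m := fun z hz =>
      le_antisymm (hle z (hsupp hz)) (hSN z hz)
    have hker : V ≤ LinearMap.ker (dotl u) := by
      rw [hV, hA, direction_affineSpan]
      rw [vectorSpan_def]
      rw [Submodule.span_le]
      rintro w hw
      obtain ⟨a, ha, b, hb, rfl⟩ := hw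
      simp only [SetLike.mem_coe, LinearMap.mem_ker]
      show dotp u (a - b) = 0
      rw [dotp_sub_right, heq a ha, heq b hb, sub_self]
    have : dotp u u = 0 := hker huV
    exact absurd this (ne_of_gt (dotp_self_pos hu0))
  -- compact sphere covering
  set sph := (V : Set (Fin D → ℝ)) ∩ Metric.sphere 0 1 with hsph
  have hsph_cpt : IsCompact sph :=
    (isCompact_sphere (0 : Fin D → ℝ) 1).inter_left V.closed_of_finiteDimensional
  have hch : ∀ i : sph, ∃ t ∈ T, 0 < dotp (i : Fin D → ℝ) (t - m) := by
    rintro ⟨u, huV, hus⟩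
    have hu0 : u ≠ 0 := by
      intro h
      rw [h] at hus
      simp [mem_sphere_zero_iff_norm] at hus
    exact key2 u huV hu0
  choose tt httT httpos using hch
  set U : sph → Set (Fin D → ℝ) := fun i => {u | dotp i.1 (tt i - m) / 2 < dotp u (tt i - m)}
    with hU
  have hUopen : ∀ i, IsOpen (U i) := fun i =>
    isOpen_lt continuous_const (continuous_dotp_left (tt i - m))
  have hcover : sph ⊆ ⋃ i, U i := by
    intro u hu
    refine Set.mem_iUnion.mpr ⟨⟨u, hu⟩, ?_⟩
    simp only [hU, Set.mem_setOf_eq]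
    linarith [httpos ⟨u, hu⟩]
  obtain ⟨F, hF⟩ := hsph_cpt.elim_finite_subcover U hUopen hcover
  set r : ℝ := if h : F.Nonempty then F.inf' h (fun i => dotp i.1 (tt i - m) / 2) else 1 with hr
  have hrpos : 0 < r := by
    rw [hr]
    split
    · next h =>
      rw [Finset.lt_inf'_iff]
      exact fun i _ => half_pos (httpos i)
    · norm_num
  set Q0 : Finset (Fin D → ℝ) := F.image tt with hQ0def
  have hdir : ∀ u ∈ sph, ∃ q ∈ Q0, r < dotp u (q - m) := by
    intro u hu
    obtain ⟨i, hiF, hiU⟩ := Set.mem_iUnion₂.mp (hF hu)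
    refine ⟨tt i, Finset.mem_image_of_mem tt hiF, ?_⟩
    have h1 : r ≤ dotp i.1 (tt i - m) / 2 := by
      rw [hr, dif_pos ⟨i, hiF⟩]
      exact Finset.inf'_le _ hiF
    have h2 : dotp i.1 (tt i - m) / 2 < dotp u (tt i - m) := hiU
    linarith
  obtain ⟨t₀, ht₀⟩ := measureSupport_nonempty ρν
  set Q : Finset (Fin D → ℝ) := insert t₀ Q0 with hQdef
  have hD1 : (0 : ℝ) < (D : ℝ) + 1 := by positivity
  refine ⟨Q, r / ((D : ℝ) + 1), by positivity, ⟨t₀, Finset.mem_insert_self _ _⟩, ?_, ?_⟩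
  · intro q hq
    rcases Finset.mem_insert.mp (Finset.mem_coe.mp hq) with h | h
    · rwa [h]
    · obtain ⟨i, hiF, rfl⟩ := Finset.mem_image.mp h
      exact httT i
  · intro y hy
    by_contra hnot
    set K := convexHull ℝ (y '' ↑Q) with hK
    have hKcpt : IsCompact K := (Q.finite_toSet.image y).isCompact_convexHull ℝ
    have hKconv : Convex ℝ K := convex_convexHull ℝ _
    have hKne : K.Nonempty :=
      ⟨y t₀, subset_convexHull ℝ _ ⟨t₀, by simp [hQdef], rfl⟩⟩
    have hKA : K ⊆ (A : Set (Fin D → ℝ)) := by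
      refine convexHull_min ?_ A.convex
      rintro _ ⟨q, hq, rfl⟩
      exact hTA (hy q (Finset.mem_coe.mp hq)).1
    have hfc : Continuous fun x : Fin D → ℝ => dotp (x - m) (x - m) := by
      unfold dotp
      refine continuous_finset_sum _ fun i _ => ?_
      simp only [Pi.sub_apply]
      exact (((continuous_apply i).sub continuous_const).mul
        ((continuous_apply i).sub continuous_const))
    obtain ⟨p, hpK, hpmin⟩ := hKcpt.exists_isMinOn hKne hfc.continuousOn
    have hpm : p ≠ m := fun h => hnot (h ▸ hpK)
    set w := p - m with hw
    have hw0 : w ≠ 0 := sub_ne_zero.mpr hpm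
    have hwV : w ∈ V := by
      rw [hV]
      exact AffineSubspace.vsub_mem_direction (hKA hpK) hmA
    have hsep : ∀ c ∈ K, dotp w w ≤ dotp w (c - m) := by
      intro c hc
      set d := c - p with hd
      have hkey : 0 ≤ dotp w d := by
        have h2 : ∀ θ : ℝ, 0 < θ → θ ≤ 1 → 0 ≤ 2 * dotp w d + θ * dotp d d := by
          intro θ hθ hθ1
          have hmem : p + θ • d ∈ K := by
            have := hKconv hpK hc (a := 1 - θ) (b := θ) (by linarith) hθ.le (by ring)
            convert this using 1
            rw [hd]
            module
          have hmin := (isMinOn_iff.mp hpmin) _ hmem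
          have hrw : p + θ • d - m = w + θ • d := by rw [hw]; module
          rw [hrw, dotp_expand] at hmin
          nlinarith
        have := nonneg_of_small (2 * dotp w d) (dotp d d) (dotp_self_nonneg d) h2
        linarith
      have hrw : c - m = w + d := by rw [hw, hd]; module
      rw [hrw, dotp_add_right]
      linarith
    set u := ‖w‖⁻¹ • w with hu
    have hnu : ‖u‖ = 1 := by
      rw [hu, norm_smul, norm_inv, norm_norm]
      exact inv_mul_cancel₀ (norm_ne_zero_iff.mpr hw0)
    have husph : -u ∈ sph := by
      constructor
      · exact V.neg_mem (V.smul_mem _ hwV)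
      · rw [mem_sphere_zero_iff_norm, norm_neg, hnu]
    obtain ⟨q, hqQ0, hqdir⟩ := hdir (-u) husph
    have hqQ : q ∈ Q := Finset.mem_insert_of_mem hqQ0
    have hyq := hy q hqQ
    have hyqK : y q ∈ K := subset_convexHull ℝ _ ⟨q, Finset.mem_coe.mpr hqQ, rfl⟩
    -- positive side
    have h1 : 0 < dotp u (y q - m) := by
      rw [hu, dotp_smul_left]
      have h3 := hsep (y q) hyqK
      have h4 : 0 < dotp w w := dotp_self_pos hw0
      have h5 : (0:ℝ) < ‖w‖⁻¹ := by
        rw [inv_pos, norm_pos_iff]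
        exact hw0
      nlinarith
    -- negative side
    have h6 : dotp u (q - m) < -r := by
      rw [dotp_neg_left] at hqdir
      linarith
    have h7 : dotp u (y q - m) = dotp u (y q - q) + dotp u (q - m) := by
      rw [← dotp_add_right]
      congr 1
      module
    have h8 : dotp u (y q - q) ≤ (D : ℝ) * (r / ((D : ℝ) + 1)) := by
      have := abs_dotp_le u (y q - q)
      rw [hnu, mul_one] at this
      have h9 : ‖y q - q‖ < r / ((D : ℝ) + 1) := by
        rw [← dist_eq_norm]
        exact hyq.2
      have h10 : dotp u (y q - q) ≤ |dotp u (y q - q)| := le_abs_self _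
      have hD0 : (0:ℝ) ≤ (D : ℝ) := Nat.cast_nonneg D
      nlinarith
    have h11 : (D : ℝ) * (r / ((D : ℝ) + 1)) < r := by
      have heq2 : (D : ℝ) * (r / ((D : ℝ) + 1)) = ((D : ℝ) * r) / ((D : ℝ) + 1) := by ring
      rw [heq2, div_lt_iff₀ hD1]
      nlinarith
    linarith

/-- **Monte Carlo cubature with relaxed sampling distribution.**  If the i.i.d. samples
`X₁, X₂, …` have common law `ν` whose `φ`-image has the same affine-hull-of-support as
the law `μ` of `X` and a support containing that of `μ`, then almost surely some finite
initial segment of samples has `E[φ(X)]` in the convex hull of its `φ`-images. -/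
theorem monte_carlo_cubature_relaxed {Ω' Ω : Type*} [MeasurableSpace Ω'] [MeasurableSpace Ω]
    (P : Measure Ω') [IsProbabilityMeasure P]
    (μ ν : Measure Ω) [IsProbabilityMeasure μ] [IsProbabilityMeasure ν]
    (X : ℕ → Ω' → Ω) (hXm : ∀ k, Measurable (X k))
    (hindep : ProbabilityTheory.iIndepFun X P)
    (hlaw : ∀ k, P.map (X k) = ν)
    (D : ℕ) (φ : Ω → Fin D → ℝ) (hφ : Measurable φ)
    (hintμ : Integrable φ μ) (hintν : Integrable φ ν)
    (haff : affineSpan ℝ (measureSupport (ν.map φ)) = affineSpan ℝ (measureSupport (μ.map φ)))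
    (hsupp : measureSupport (μ.map φ) ⊆ measureSupport (ν.map φ)) :
    ∀ᵐ ω' ∂P, ∃ n : ℕ, 0 < n ∧
      (fun i => ∫ ω, φ ω i ∂μ) ∈
        convexHull ℝ {y : Fin D → ℝ | ∃ k < n, y = φ (X k ω')} := by
  classical
  have hρμ : IsProbabilityMeasure (μ.map φ) := Measure.isProbabilityMeasure_map hφ.aemeasurable
  have hρν : IsProbabilityMeasure (ν.map φ) := Measure.isProbabilityMeasure_map hφ.aemeasurable
  have hint : Integrable id (μ.map φ) := by
    rw [integrable_map_measure aestronglyMeasurable_id hφ.aemeasurable]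
    exact hintμ
  -- identify the mean
  have hmean : (fun i => ∫ ω, φ ω i ∂μ) = ∫ z, z ∂(μ.map φ) := by
    have h1 : ∫ z, z ∂(μ.map φ) = ∫ ω, φ ω ∂μ :=
      integral_map hφ.aemeasurable aestronglyMeasurable_id
    rw [h1]
    funext i
    exact ContinuousLinearMap.integral_comp_comm
      (ContinuousLinearMap.proj (R := ℝ) (φ := fun _ : Fin D => ℝ) i) hintμ
  obtain ⟨Q, ε, hε, hQne, hQT, hrob⟩ := key_lemma (μ.map φ) (ν.map φ) hint haff hsupp
  set T := measureSupport (ν.map φ) with hT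
  -- for each q in Q, a.s. some sample hits ball q ε ∩ T
  have hhit : ∀ q ∈ Q, ∀ᵐ ω' ∂P, ∃ j : ℕ, φ (X j ω') ∈ Metric.ball q ε ∩ T := by
    intro q hq
    set B : Set (Fin D → ℝ) := Metric.ball q ε ∩ T with hB
    have hBm : MeasurableSet B :=
      measurableSet_ball.inter (isClosed_measureSupport _).measurableSet
    set W : Set Ω := φ ⁻¹' B with hW
    have hWm : MeasurableSet W := hφ hBm
    have hTnull : (ν.map φ) Tᶜ = 0 := measureSupport_compl_null (ν.map φ)
    have hppos : 0 < (ν.map φ) B := by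
      have hball : 0 < (ν.map φ) (Metric.ball q ε) := by
        have hqT : q ∈ T := hQT (Finset.mem_coe.mpr hq)
        exact hqT (Metric.ball q ε) (Metric.ball_mem_nhds q hε)
      have hle : (ν.map φ) (Metric.ball q ε) ≤ (ν.map φ) B + (ν.map φ) Tᶜ := by
        refine le_trans (measure_mono ?_) (measure_union_le _ _)
        intro z hz
        by_cases hzT : z ∈ T
        · exact Or.inl ⟨hz, hzT⟩
        · exact Or.inr hzT
      rw [hTnull, add_zero] at hle
      exact lt_of_lt_of_le hball hle
    have hνW : 0 < ν W := by
      rw [hW, ← Measure.map_apply hφ hBm]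
      exact hppos
    -- complement event has probability 0
    have hXW : ∀ j, P ((X j) ⁻¹' Wᶜ) = ν Wᶜ := by
      intro j
      rw [← hlaw j, Measure.map_apply (hXm j) hWm.compl]
    have hCn : ∀ n : ℕ, P (⋂ j ∈ Finset.range n, (X j) ⁻¹' Wᶜ) = (ν Wᶜ) ^ n := by
      intro n
      rw [hindep.measure_inter_preimage_eq_mul (Finset.range n) (sets := fun _ => Wᶜ)
        (fun i _ => hWm.compl)]
      rw [Finset.prod_congr rfl fun j _ => hXW j, Finset.prod_const, Finset.card_range]
    have hlt1 : ν Wᶜ < 1 := by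
      rw [prob_compl_eq_one_sub hWm]
      exact ENNReal.sub_lt_self ENNReal.one_ne_top one_ne_zero hνW.ne'
    have hC0 : P (⋂ j : ℕ, (X j) ⁻¹' Wᶜ) = 0 := by
      have hb : ∀ n : ℕ, P (⋂ j : ℕ, (X j) ⁻¹' Wᶜ) ≤ (ν Wᶜ) ^ n := by
        intro n
        rw [← hCn n]
        refine measure_mono fun x hx => ?_
        simp only [Set.mem_iInter] at hx ⊢
        exact fun j _ => hx j
      have htend := ENNReal.tendsto_pow_atTop_nhds_zero_of_lt_one hlt1
      have := ge_of_tendsto htend (Filter.Eventually.of_forall hb)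
      exact le_antisymm this zero_le
    rw [ae_iff]
    convert hC0 using 2
    ext ω'
    simp only [Set.mem_setOf_eq, not_exists, Set.mem_iInter, Set.mem_preimage,
      Set.mem_compl_iff, hW, Set.mem_preimage]
  have hae : ∀ᵐ ω' ∂P, ∀ q ∈ (↑Q : Set (Fin D → ℝ)), ∃ j : ℕ,
      φ (X j ω') ∈ Metric.ball q ε ∩ T :=
    (ae_ball_iff Q.countable_toSet).mpr fun q hq => hhit q (Finset.mem_coe.mp hq)
  filter_upwards [hae] with ω' hω'
  choose! j hj using hω'
  refine ⟨Q.sup j + 1, Nat.succ_pos _, ?_⟩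
  rw [hmean]
  have hconv := hrob (fun q => φ (X (j q) ω')) (fun q hq => ?_)
  · refine convexHull_mono ?_ hconv
    rintro _ ⟨q, hq, rfl⟩
    exact ⟨j q, Nat.lt_succ_of_le (Finset.le_sup (Finset.mem_coe.mp hq)), rfl⟩
  · obtain ⟨h1, h2⟩ := hj q (Finset.mem_coe.mpr hq)
    exact ⟨h2, by rwa [Metric.mem_ball] at h1⟩
end
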